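/- Let n ≥ 1, let A > 0, 0 < r ≤ R, and let ȳ ∈ ℝⁿ be such that the closed ball B(ȳ, r) is contained in the closed ball B(0, R). Let φ : ℝⁿ → ℝ be measurable with φ(y) ≥ 0 for all y ∈ B(0, R) and φ(y) ≤ A|y − ȳ| for all y ∈ B(ȳ, r). Then there exists a constant C > 0, depending only on n, A, r, R, such that for every ε ∈ (0, 1], the integral I(ε) := ∫_{B(0,R)} e^{−φ(y)/ε} dy satisfies | ε log( ε^{−n/2} I(ε) ) | ≤ ε ( C + (n/2) |log ε| ). -/

import Mathlib

open scoped RealInnerProductSpace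
open MeasureTheory

/-- The Euclidean Laplacian: sum of second partial derivatives. -/
noncomputable def lap {n : ℕ} (f : EuclideanSpace ℝ (Fin n) → ℝ)
    (x : EuclideanSpace ℝ (Fin n)) : ℝ :=
  ∑ i : Fin n,
    fderiv ℝ (fun y => fderiv ℝ f y (EuclideanSpace.single i 1)) x (EuclideanSpace.single i 1)

/-- The divergence of a vector field: sum of partial derivatives of the components. -/
noncomputable def dvg {n : ℕ} (F : EuclideanSpace ℝ (Fin n) → EuclideanSpace ℝ (Fin n))
    (x : EuclideanSpace ℝ (Fin n)) : ℝ :=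
  ∑ i : Fin n, fderiv ℝ (fun y => F y i) x (EuclideanSpace.single i 1)

/-- A function on ℝⁿ is ℤⁿ-periodic if it is invariant under translation by
every integer vector. -/
def IsZnPeriodic {n : ℕ} {α : Type*} (f : EuclideanSpace ℝ (Fin n) → α) : Prop :=
  ∀ (x : EuclideanSpace ℝ (Fin n)) (k : Fin n → ℤ),
    f (x + ∑ i : Fin n, (k i : ℝ) • EuclideanSpace.single i (1 : ℝ)) = f x

/-- The unit cube [0,1]ⁿ in ℝⁿ. -/
def unitCube (n : ℕ) : Set (EuclideanSpace ℝ (Fin n)) :=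
  {x | ∀ i, x i ∈ Set.Icc (0 : ℝ) 1}

/-- Laplace estimate, Lipschitz exponent: if φ ≥ 0 on B(0,R) and
φ(y) ≤ A|y − ȳ| on B(ȳ,r) ⊆ B(0,R), then for I(ε) = ∫_{B(0,R)} e^{−φ/ε},
|ε log(ε^{−n/2} I(ε))| ≤ ε (C + (n/2)|log ε|) with C depending only on n, A, r, R. -/
theorem laplace_estimate_lipschitz (n : ℕ) (hn : 1 ≤ n) (A r R : ℝ)
    (hA : 0 < A) (hr : 0 < r) (hrR : r ≤ R) :
    ∃ C > (0 : ℝ), ∀ (ybar : EuclideanSpace ℝ (Fin n)) (φ : EuclideanSpace ℝ (Fin n) → ℝ),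
      Metric.closedBall ybar r ⊆ Metric.closedBall 0 R →
      Measurable φ →
      (∀ y ∈ Metric.closedBall (0 : EuclideanSpace ℝ (Fin n)) R, 0 ≤ φ y) →
      (∀ y ∈ Metric.closedBall ybar r, φ y ≤ A * ‖y - ybar‖) →
      ∀ ε : ℝ, ε ∈ Set.Ioc (0 : ℝ) 1 →
        |ε * Real.log (ε ^ (-(n : ℝ)/2) *
            ∫ y in Metric.closedBall (0 : EuclideanSpace ℝ (Fin n)) R,
              Real.exp (-(φ y)/ε))|
          ≤ ε * (C + ((n : ℝ)/2) * |Real.log ε|) := by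
  classical
  have hR : 0 < R := lt_of_lt_of_le hr hrR
  set v : ℝ := (volume (Metric.closedBall (0 : EuclideanSpace ℝ (Fin n)) 1)).toReal with hv_def
  have hvpos : 0 < v := by
    apply ENNReal.toReal_pos
    · exact (Metric.measure_closedBall_pos volume 0 one_pos).ne'
    · exact measure_closedBall_lt_top.ne
  have hvol : ∀ (x : EuclideanSpace ℝ (Fin n)) (ρ : ℝ), 0 ≤ ρ →
      (volume (Metric.closedBall x ρ)).toReal = ρ ^ n * v := by
    intro x ρ hρ
    rw [Measure.addHaar_closedBall' volume x hρ, ENNReal.toReal_mul,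
      ENNReal.toReal_ofReal (by positivity)]
    simp [hv_def, finrank_euclideanSpace_fin]
  refine ⟨A*r + n*|Real.log r| + |Real.log v| + |Real.log (R^n * v)| + 1, by positivity, ?_⟩
  intro ybar φ hsub hφm hφ0 hφA ε hε
  obtain ⟨hε0, hε1⟩ := hε
  set s := Metric.closedBall (0 : EuclideanSpace ℝ (Fin n)) R with hs_def
  have hsmeas : MeasurableSet s := measurableSet_closedBall
  have hsvol : volume s < ⊤ := measure_closedBall_lt_top
  have hmf : Measurable fun y : EuclideanSpace ℝ (Fin n) => Real.exp (-(φ y)/ε) :=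
    Real.measurable_exp.comp ((hφm.neg).div_const ε)
  have hexp_le_one : ∀ y ∈ s, Real.exp (-(φ y)/ε) ≤ 1 := by
    intro y hy
    apply Real.exp_le_one_iff.mpr
    exact div_nonpos_of_nonpos_of_nonneg (neg_nonpos.mpr (hφ0 y hy)) hε0.le
  have hInt : IntegrableOn (fun y => Real.exp (-(φ y)/ε)) s := by
    apply Measure.integrableOn_of_bounded hsvol.ne hmf.aestronglyMeasurable (M := 1)
    filter_upwards [ae_restrict_mem hsmeas] with y hy
    rw [Real.norm_eq_abs, abs_of_pos (Real.exp_pos _)]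
    exact hexp_le_one y hy
  have hub : (∫ y in s, Real.exp (-(φ y)/ε)) ≤ R^n * v := by
    calc (∫ y in s, Real.exp (-(φ y)/ε)) ≤ ∫ _y in s, (1:ℝ) :=
          setIntegral_mono_on hInt (integrableOn_const hsvol.ne) hsmeas hexp_le_one
      _ = R^n * v := by rw [setIntegral_const, smul_eq_mul, mul_one, measureReal_def, hvol 0 R hR.le]
  set s' := Metric.closedBall ybar (ε*r) with hs'_def
  have hs'sub : s' ⊆ Metric.closedBall ybar r :=
    Metric.closedBall_subset_closedBall (by nlinarith)
  have hs'subs : s' ⊆ s := hs'sub.trans hsub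
  have hlb1 : ∀ y ∈ s', Real.exp (-(A*r)) ≤ Real.exp (-(φ y)/ε) := by
    intro y hy
    apply Real.exp_le_exp.mpr
    have h1 : φ y ≤ A * ‖y - ybar‖ := hφA y (hs'sub hy)
    have h2 : ‖y - ybar‖ ≤ ε * r := by
      simpa [hs'_def, Metric.mem_closedBall, dist_eq_norm] using hy
    rw [neg_div, neg_le_neg_iff, div_le_iff₀ hε0]
    nlinarith [mul_le_mul_of_nonneg_left h2 hA.le]
  have hlb : Real.exp (-(A*r)) * ((ε*r)^n * v) ≤ ∫ y in s, Real.exp (-(φ y)/ε) := by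
    have h1 : (∫ _y in s', Real.exp (-(A*r))) ≤ ∫ y in s', Real.exp (-(φ y)/ε) :=
      setIntegral_mono_on (integrableOn_const measure_closedBall_lt_top.ne)
        (hInt.mono_set hs'subs) measurableSet_closedBall hlb1
    have h2 : (∫ y in s', Real.exp (-(φ y)/ε)) ≤ ∫ y in s, Real.exp (-(φ y)/ε) :=
      setIntegral_mono_set hInt
        (Filter.Eventually.of_forall fun y => (Real.exp_pos _).le)
        (HasSubset.Subset.eventuallyLE hs'subs)
    have h3 : (∫ _y in s', Real.exp (-(A*r))) = (ε*r)^n * v * Real.exp (-(A*r)) := by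
      rw [setIntegral_const, smul_eq_mul, measureReal_def, hvol ybar (ε*r) (by positivity)]
    linarith
  set I := ∫ y in s, Real.exp (-(φ y)/ε) with hI_def
  have hIpos : 0 < I := lt_of_lt_of_le (by positivity) hlb
  have hεpow : (0:ℝ) < ε ^ (-(n:ℝ)/2) := Real.rpow_pos_of_pos hε0 _
  have hlog : Real.log (ε ^ (-(n:ℝ)/2) * I) = (-(n:ℝ)/2) * Real.log ε + Real.log I := by
    rw [Real.log_mul hεpow.ne' hIpos.ne', Real.log_rpow hε0]
  have hL : Real.log ε ≤ 0 := Real.log_nonpos hε0.le hε1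
  have hLabs : |Real.log ε| = -Real.log ε := abs_of_nonpos hL
  have hlogI_ub : Real.log I ≤ Real.log (R^n * v) := Real.log_le_log hIpos hub
  have hlogI_lb : -(A*r) + ((n:ℝ) * (Real.log ε + Real.log r) + Real.log v)
      ≤ Real.log I := by
    have h := Real.log_le_log (by positivity) hlb
    rwa [Real.log_mul (Real.exp_pos _).ne' (by positivity), Real.log_exp,
      Real.log_mul (by positivity) hvpos.ne', Real.log_pow,
      Real.log_mul hε0.ne' hr.ne'] at h
  rw [abs_mul, abs_of_pos hε0]
  apply mul_le_mul_of_nonneg_left _ hε0.le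
  rw [hlog, abs_le, hLabs]
  have h1 := le_abs_self (Real.log (R^n*v))
  have h2 := neg_abs_le (Real.log (R^n*v))
  have h3 := neg_abs_le (Real.log v)
  have h4 : (n:ℝ) * (-|Real.log r|) ≤ (n:ℝ) * Real.log r :=
    mul_le_mul_of_nonneg_left (neg_abs_le _) (by positivity)
  constructor
  · nlinarith [abs_nonneg (Real.log r), abs_nonneg (Real.log v)]
  · nlinarith [abs_nonneg (Real.log r), abs_nonneg (Real.log v)]
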